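/- Let T>0 and let n≥1 be an integer, τ=T/n, t_k=kτ for k=0,…,n. Let s:ℝ→ℝ be absolutely continuous on [0,T] with square-integrable derivative s'. Then |∑_{k=0}^{n-1} τ·s(t_k)² − ∫₀ᵀ s(t)² dt| ≤ τ·∫₀ᵀ (s(t)² + s'(t)²) dt. -/

import Mathlib

open MeasureTheory Filter Topology

lemma fubini_triangle (f : ℝ → ℝ) (a b : ℝ) (hab : a ≤ b)
    (hf : IntervalIntegrable f volume a b) :
    (∫ t in a..b, f t)^2 = 2 * ∫ t in a..b, (∫ u in a..t, f u) * f t := by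
  set μ := volume.restrict (Set.Ioc a b) with hμ
  have hfI : Integrable f μ := hf.1
  have hFm : MeasurableSet {q : ℝ × ℝ | q.2 ≤ q.1} := measurableSet_le measurable_snd measurable_fst
  set F : ℝ × ℝ → ℝ := {q : ℝ × ℝ | q.2 ≤ q.1}.indicator (fun q => f q.1 * f q.2) with hF
  have hFint : Integrable F (μ.prod μ) := (hfI.mul_prod hfI).indicator hFm
  have swap : (∫ u, ∫ v, F (u, v) ∂μ ∂μ) = ∫ v, ∫ u, F (u, v) ∂μ ∂μ :=
    integral_integral_swap hFint
  set S := ∫ t in Set.Ioc a b, f t with hS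
  set G : ℝ → ℝ := fun t => ∫ u in Set.Ioc a t, f u with hG
  have hL : (∫ u, ∫ v, F (u, v) ∂μ ∂μ) = ∫ u, f u * G u ∂μ := by
    apply setIntegral_congr_fun measurableSet_Ioc
    intro u hu
    show (∫ v, F (u, v) ∂μ) = f u * G u
    have h1 : (fun v => F (u, v)) = (Set.Iic u).indicator (fun v => f u * f v) := by
      ext v
      simp only [hF, Set.indicator_apply, Set.mem_setOf_eq, Set.mem_Iic]
    rw [show (∫ v, F (u, v) ∂μ) = ∫ v, (fun v => F (u, v)) v ∂μ from rfl, h1,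
      integral_indicator measurableSet_Iic, hμ,
      Measure.restrict_restrict measurableSet_Iic]
    have h2 : Set.Iic u ∩ Set.Ioc a b = Set.Ioc a u := by
      ext x; simp only [Set.mem_inter_iff, Set.mem_Iic, Set.mem_Ioc]
      exact ⟨fun ⟨h1, h2, h3⟩ => ⟨h2, h1⟩, fun ⟨h1, h2⟩ => ⟨h2, h1, h2.trans hu.2⟩⟩
    rw [h2, integral_const_mul]
  have hGv : ∀ v ∈ Set.Ioc a b, (∫ u in Set.Ioc v b, f u) = S - G v := by
    intro v hv
    have hadd : (∫ u in Set.Ioc a v, f u) + ∫ u in Set.Ioc v b, f u = S := by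
      rw [hS, ← setIntegral_union (Set.Ioc_disjoint_Ioc_of_le le_rfl) measurableSet_Ioc
        (hf.1.mono_set (Set.Ioc_subset_Ioc_right hv.2))
        (hf.1.mono_set (Set.Ioc_subset_Ioc_left hv.1.le)),
        Set.Ioc_union_Ioc_eq_Ioc hv.1.le hv.2]
    have hGv' : G v = ∫ u in Set.Ioc a v, f u := rfl
    linarith
  have hR : (∫ v, ∫ u, F (u, v) ∂μ ∂μ) = ∫ v, f v * (S - G v) ∂μ := by
    apply setIntegral_congr_fun measurableSet_Ioc
    intro v hv
    show (∫ u, F (u, v) ∂μ) = f v * (S - G v)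
    have h1 : (fun u => F (u, v)) = (Set.Ici v).indicator (fun u => f u * f v) := by
      ext u
      simp only [hF, Set.indicator_apply, Set.mem_setOf_eq, Set.mem_Ici]
    rw [show (∫ u, F (u, v) ∂μ) = ∫ u, (fun u => F (u, v)) u ∂μ from rfl, h1,
      integral_indicator measurableSet_Ici, hμ,
      Measure.restrict_restrict measurableSet_Ici]
    have hset : Set.Ici v ∩ Set.Ioc a b = Set.Icc v b := by
      ext x; simp only [Set.mem_inter_iff, Set.mem_Ici, Set.mem_Ioc, Set.mem_Icc]
      exact ⟨fun ⟨h1, h2, h3⟩ => ⟨h1, h3⟩, fun ⟨h1, h2⟩ => ⟨h1, hv.1.trans_le h1, h2⟩⟩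
    rw [hset, integral_Icc_eq_integral_Ioc, integral_mul_const, hGv v hv, mul_comm]
  rw [hL, hR] at swap
  have hGc : ContinuousOn G (Set.Icc a b) :=
    intervalIntegral.continuousOn_primitive ((integrableOn_Icc_iff_integrableOn_Ioc (f := f)).mpr hf.1)
  have hGmul : Integrable (fun v => f v * G v) μ := by
    have h0 : IntervalIntegrable (fun x => G x * f x) volume a b :=
      hf.continuousOn_mul (by rw [Set.uIcc_of_le hab]; exact hGc)
    have := h0.1
    rw [hμ]
    exact this.congr (Filter.Eventually.of_forall fun x => by ring)
  have expand : (∫ v, f v * (S - G v) ∂μ) = S * S - ∫ v, f v * G v ∂μ := by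
    have h1 : (∫ v, f v * (S - G v) ∂μ) = (∫ v, (f v * S - f v * G v) ∂μ) := by
      congr 1; ext v; ring
    rw [h1, integral_sub (hfI.mul_const S) hGmul, integral_mul_const]
  rw [expand] at swap
  have key : 2 * (∫ v, f v * G v ∂μ) = S * S := by linarith
  rw [intervalIntegral.integral_of_le hab, intervalIntegral.integral_of_le hab]
  have : (∫ t in Set.Ioc a b, (∫ u in a..t, f u) * f t) = ∫ v, G v * f v ∂μ := by
    apply setIntegral_congr_fun measurableSet_Ioc
    intro t ht
    simp only [intervalIntegral.integral_of_le (ht.1.le.trans (le_refl t) : a ≤ t)]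
    rfl
  rw [this]
  have : (∫ v, G v * f v ∂μ) = ∫ v, f v * G v ∂μ := by
    congr 1; ext v; ring
  rw [this]
  rw [pow_two]
  linarith [key]

lemma chain_sq (s s' : ℝ → ℝ) (T a b : ℝ) (ha : 0 ≤ a) (hab : a ≤ b) (hbT : b ≤ T)
    (hs'int : IntervalIntegrable s' volume 0 T)
    (hftc : ∀ a b : ℝ, 0 ≤ a → a ≤ b → b ≤ T → s b - s a = ∫ t in a..b, s' t) :
    s b ^ 2 - s a ^ 2 = ∫ t in a..b, 2 * s t * s' t := by
  have hsub : IntervalIntegrable s' volume a b := by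
    apply hs'int.mono_set
    rw [Set.uIcc_of_le hab, Set.uIcc_of_le (ha.trans (hab.trans hbT))]
    exact Set.Icc_subset_Icc ha hbT
  set G : ℝ → ℝ := fun t => ∫ u in a..t, s' u with hG
  have hGc : ContinuousOn G (Set.uIcc a b) :=
    intervalIntegral.continuousOn_primitive_interval' hsub Set.left_mem_uIcc
  have hGint : IntervalIntegrable (fun t => G t * s' t) volume a b :=
    hsub.continuousOn_mul hGc
  have hcongr : Set.EqOn (fun t => 2 * s t * s' t)
      (fun t => 2 * s a * s' t + 2 * (G t * s' t)) (Set.uIcc a b) := by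
    intro t ht
    rw [Set.uIcc_of_le hab] at ht
    have hst : s t - s a = G t := hftc a t ha ht.1 (ht.2.trans hbT)
    simp only
    have : s t = s a + G t := by linarith
    rw [this]; ring
  rw [intervalIntegral.integral_congr hcongr,
    intervalIntegral.integral_add ((hsub.const_mul _)) (hGint.const_mul 2),
    intervalIntegral.integral_const_mul, intervalIntegral.integral_const_mul,
    ← hftc a b ha hab hbT]
  have := fubini_triangle s' a b hab hsub
  rw [← hftc a b ha hab hbT] at this
  nlinarith [this]

/-- comparison of the discrete and continuous `L²` norms of `s`
(inequality (2.11)). -/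
theorem stmt_3 (T : ℝ) (hT : 0 < T) (n : ℕ) (hn : 1 ≤ n) (τ : ℝ) (hτ : τ = T / n)
    (s s' : ℝ → ℝ)
    (hs'int : IntervalIntegrable s' volume 0 T)
    (hs'sq : IntervalIntegrable (fun t => (s' t)^2) volume 0 T)
    (hftc : ∀ a b : ℝ, 0 ≤ a → a ≤ b → b ≤ T → s b - s a = ∫ t in a..b, s' t) :
    |∑ k ∈ Finset.range n, τ * (s ((k:ℝ)*τ))^2 - ∫ t in (0:ℝ)..T, (s t)^2|
      ≤ τ * ∫ t in (0:ℝ)..T, ((s t)^2 + (s' t)^2) := by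
  have hn0 : (0:ℝ) < n := by exact_mod_cast Nat.lt_of_lt_of_le Nat.zero_lt_one hn
  have hτpos : 0 < τ := by rw [hτ]; exact div_pos hT hn0
  have hsub : ∀ c d : ℝ, 0 ≤ c → c ≤ d → d ≤ T → IntervalIntegrable s' volume c d := by
    intro c d hc hcd hd
    apply hs'int.mono_set
    rw [Set.uIcc_of_le hT.le, Set.uIcc_of_le hcd]
    exact Set.Icc_subset_Icc hc hd
  have hsq'sub : ∀ c d : ℝ, 0 ≤ c → c ≤ d → d ≤ T →
      IntervalIntegrable (fun t => (s' t)^2) volume c d := by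
    intro c d hc hcd hd
    apply hs'sq.mono_set
    rw [Set.uIcc_of_le hT.le, Set.uIcc_of_le hcd]
    exact Set.Icc_subset_Icc hc hd
  -- continuity of s on [0, T]
  have hscont : ContinuousOn s (Set.Icc 0 T) := by
    have h1 : ContinuousOn (fun t => s 0 + ∫ u in (0:ℝ)..t, s' u) (Set.uIcc 0 T) :=
      continuousOn_const.add
        (intervalIntegral.continuousOn_primitive_interval' hs'int Set.left_mem_uIcc)
    rw [Set.uIcc_of_le hT.le] at h1
    apply h1.congr
    intro t ht
    have := hftc 0 t le_rfl ht.1 ht.2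
    simp only
    linarith
  have hscontsub : ∀ c d : ℝ, 0 ≤ c → c ≤ d → d ≤ T → ContinuousOn s (Set.uIcc c d) := by
    intro c d hc hcd hd
    rw [Set.uIcc_of_le hcd]
    exact hscont.mono (Set.Icc_subset_Icc hc hd)
  have hsqsub : ∀ c d : ℝ, 0 ≤ c → c ≤ d → d ≤ T →
      IntervalIntegrable (fun t => (s t)^2) volume c d := by
    intro c d hc hcd hd
    exact ((hscontsub c d hc hcd hd).pow 2).intervalIntegrable
  have hsumint : ∀ c d : ℝ, 0 ≤ c → c ≤ d → d ≤ T →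
      IntervalIntegrable (fun t => (s t)^2 + (s' t)^2) volume c d := by
    intro c d hc hcd hd
    exact (hsqsub c d hc hcd hd).add (hsq'sub c d hc hcd hd)
  -- grid points
  have hak : ∀ k : ℕ, k ≤ n → ((k:ℝ) * τ ≤ T) := by
    intro k hk
    rw [hτ]
    rw [div_eq_mul_inv, ← mul_assoc]
    calc (k:ℝ) * T * (n:ℝ)⁻¹ ≤ (n:ℝ) * T * (n:ℝ)⁻¹ := by
          apply mul_le_mul_of_nonneg_right _ (by positivity)
          exact mul_le_mul_of_nonneg_right (by exact_mod_cast hk) hT.le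
      _ = T := by field_simp
  have haknn : ∀ k : ℕ, (0:ℝ) ≤ (k:ℝ) * τ := fun k => by positivity
  have hastep : ∀ k : ℕ, (k:ℝ) * τ ≤ ((k:ℝ)+1) * τ := fun k => by nlinarith
  have hTn : (n:ℝ) * τ = T := by rw [hτ]; field_simp
  -- splitting the integrals
  have hsplit : ∀ g : ℝ → ℝ, (∀ c d : ℝ, 0 ≤ c → c ≤ d → d ≤ T →
      IntervalIntegrable g volume c d) →
      (∑ k ∈ Finset.range n, ∫ t in ((k:ℝ)*τ)..(((k:ℝ)+1)*τ), g t) = ∫ t in (0:ℝ)..T, g t := by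
    intro g hg
    have := intervalIntegral.sum_integral_adjacent_intervals
      (a := fun k : ℕ => (k:ℝ) * τ) (μ := volume) (f := g) (n := n) ?_
    · rw [show ((0:ℕ):ℝ) * τ = 0 by simp, hTn] at this
      rw [← this]
      apply Finset.sum_congr rfl
      intro k _
      push_cast
      ring_nf
    · intro k hk
      have h1 : ((k+1:ℕ):ℝ) * τ = ((k:ℝ)+1) * τ := by push_cast; ring
      rw [h1]
      exact hg _ _ (haknn k) (hastep k) (by
        have : ((k:ℝ)+1) * τ = ((k+1:ℕ):ℝ) * τ := by push_cast; ring
        rw [this]; exact hak (k+1) hk)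
  -- per-interval estimate
  have key : ∀ k : ℕ, k < n →
      |τ * (s ((k:ℝ)*τ))^2 - ∫ t in ((k:ℝ)*τ)..(((k:ℝ)+1)*τ), (s t)^2|
        ≤ τ * ∫ t in ((k:ℝ)*τ)..(((k:ℝ)+1)*τ), ((s t)^2 + (s' t)^2) := by
    intro k hk
    set c := (k:ℝ) * τ with hc
    set d := ((k:ℝ)+1) * τ with hd
    have hc0 : 0 ≤ c := haknn k
    have hcd : c ≤ d := hastep k
    have hdT : d ≤ T := by
      have : d = ((k+1:ℕ):ℝ) * τ := by rw [hd]; push_cast; ring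
      rw [this]; exact hak (k+1) hk
    have hdc : d - c = τ := by rw [hc, hd]; ring
    set I := ∫ t in c..d, ((s t)^2 + (s' t)^2) with hI
    -- pointwise bound
    have hpt : ∀ t ∈ Set.Icc c d, |(s c)^2 - (s t)^2| ≤ I := by
      intro t ht
      have hct : c ≤ t := ht.1
      have htd : t ≤ d := ht.2
      have htT : t ≤ T := htd.trans hdT
      have hchain := chain_sq s s' T c t hc0 hct htT hs'int hftc
      have habs : |(s t)^2 - (s c)^2| ≤ ∫ u in c..t, |2 * s u * s' u| := by
        rw [hchain]
        exact intervalIntegral.abs_integral_le_integral_abs hct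
      have h2int : IntervalIntegrable (fun u => 2 * s u * s' u) volume c t := by
        apply (hsub c t hc0 hct htT).continuousOn_mul
        exact (continuousOn_const.mul (hscontsub c t hc0 hct htT))
      have hmono1 : (∫ u in c..t, |2 * s u * s' u|) ≤ ∫ u in c..t, ((s u)^2 + (s' u)^2) := by
        apply intervalIntegral.integral_mono_on hct h2int.abs (hsumint c t hc0 hct htT)
        intro u _
        rw [abs_mul, abs_mul]
        simp only [abs_two]
        nlinarith [sq_nonneg (|s u| - |s' u|), sq_abs (s u), sq_abs (s' u), abs_nonneg (s u),
          abs_nonneg (s' u)]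
      have hmono2 : (∫ u in c..t, ((s u)^2 + (s' u)^2)) ≤ I := by
        rw [hI]
        apply intervalIntegral.integral_mono_interval le_rfl hct htd _
          (hsumint c d hc0 hcd hdT)
        filter_upwards with u
        positivity
      rw [abs_sub_comm] at habs
      linarith
    -- rewrite difference as an integral
    have hconst : τ * (s c)^2 = ∫ t in c..d, (s c)^2 := by
      rw [intervalIntegral.integral_const, smul_eq_mul, hdc]
    have hdiff : τ * (s c)^2 - (∫ t in c..d, (s t)^2)
        = ∫ t in c..d, ((s c)^2 - (s t)^2) := by
      rw [hconst, intervalIntegral.integral_sub intervalIntegrable_const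
        (hsqsub c d hc0 hcd hdT)]
    rw [hdiff]
    have := intervalIntegral.norm_integral_le_of_norm_le_const
      (f := fun t => (s c)^2 - (s t)^2) (C := I) (a := c) (b := d) ?_
    · rw [Real.norm_eq_abs] at this
      calc |∫ t in c..d, ((s c)^2 - (s t)^2)| ≤ I * |d - c| := this
        _ = τ * I := by rw [hdc, abs_of_pos hτpos]; ring
    · intro x hx
      rw [Real.norm_eq_abs]
      apply hpt
      rw [Set.uIoc_of_le hcd] at hx
      exact ⟨hx.1.le, hx.2⟩
  -- assembly
  rw [← hsplit (fun t => (s t)^2) hsqsub, ← hsplit (fun t => (s t)^2 + (s' t)^2) hsumint,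
    ← Finset.sum_sub_distrib, Finset.mul_sum]
  calc |∑ k ∈ Finset.range n, (τ * (s ((k:ℝ)*τ))^2 - ∫ t in ((k:ℝ)*τ)..(((k:ℝ)+1)*τ), (s t)^2)|
      ≤ ∑ k ∈ Finset.range n, |τ * (s ((k:ℝ)*τ))^2 - ∫ t in ((k:ℝ)*τ)..(((k:ℝ)+1)*τ), (s t)^2| :=
        Finset.abs_sum_le_sum_abs _ _
    _ ≤ ∑ k ∈ Finset.range n, τ * ∫ t in ((k:ℝ)*τ)..(((k:ℝ)+1)*τ), ((s t)^2 + (s' t)^2) := by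
        apply Finset.sum_le_sum
        intro k hk
        exact key k (Finset.mem_range.mp hk)
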